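/- Let C and D be pure submonoids of (ℤⁿ, +). Then conv(C) ∩ conv(D) = conv(C ∩ conv(D)) = conv(C ∩ D), where conv denotes convex hull in ℝⁿ. -/

import Mathlib

open Finset



/-- Canonical embedding of `ℤⁿ` into `ℝⁿ`. -/
def coeR {n : ℕ} (α : Fin n → ℤ) : Fin n → ℝ := fun i => (α i : ℝ)

/-- Convex hull in `ℝⁿ` of a subset of `ℤⁿ`. -/
def convC {n : ℕ} (C : Set (Fin n → ℤ)) : Set (Fin n → ℝ) :=
  convexHull ℝ (coeR '' C)

/-- The closure `cl(C) = ℤⁿ ∩ topological-closure(conv C)` of a subset of `ℤⁿ`. -/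
def intCl {n : ℕ} (C : Set (Fin n → ℤ)) : Set (Fin n → ℤ) :=
  {α | coeR α ∈ closure (convC C)}

/-- `C` is pure: `kα ∈ C` with `k ≥ 1` implies `α ∈ C`. -/
def IsPure {n : ℕ} (C : Set (Fin n → ℤ)) : Prop :=
  ∀ (k : ℕ) (α : Fin n → ℤ), 1 ≤ k → k • α ∈ C → α ∈ C

/-- `C` is a submonoid of `(ℤⁿ, +)` (as a set). -/
def IsSubmonoidSet {n : ℕ} (C : Set (Fin n → ℤ)) : Prop :=
  (0 : Fin n → ℤ) ∈ C ∧ ∀ a ∈ C, ∀ b ∈ C, a + b ∈ C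

/-- `M` is a finitely generated monoid (as a subset of `ℤⁿ`). -/
def IsFGSet {n : ℕ} (M : Set (Fin n → ℤ)) : Prop :=
  ∃ F : Finset (Fin n → ℤ),
    (AddSubmonoid.closure (F : Set (Fin n → ℤ)) : Set (Fin n → ℤ)) = M

/-- `C` is almost prismal: for every real subspace `V ⊆ ℝⁿ`, `cl(C ∩ V)` is finitely generated. -/
def AlmostPrismal {n : ℕ} (C : Set (Fin n → ℤ)) : Prop :=
  ∀ V : Submodule ℝ (Fin n → ℝ), IsFGSet (intCl {α ∈ C | coeR α ∈ V})

/-- `C` is prismal: pure and almost prismal. -/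
def Prismal {n : ℕ} (C : Set (Fin n → ℤ)) : Prop := IsPure C ∧ AlmostPrismal C

section Aux

lemma descent {ι κ : Type} [Fintype ι] [Fintype κ] (u : ι → κ → ℚ) (c : κ → ℚ)
    (a : ι → ℝ) (h : ∀ k, ∑ i, a i * (u i k : ℝ) = (c k : ℝ)) :
    ∃ q : ι → ℚ, ∀ k, ∑ i, q i * u i k = c k := by
  classical
  by_contra hq
  push_neg at hq
  have hc : c ∉ Submodule.span ℚ (Set.range u) := by
    intro hmem
    rcases (Submodule.mem_span_range_iff_exists_fun ℚ).1 hmem with ⟨q, hq'⟩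
    obtain ⟨k, hk⟩ := hq q
    refine hk ?_
    have := congrFun hq' k
    simpa [Finset.sum_apply, mul_comm] using this
  set W := Submodule.span ℚ (Set.range u)
  have hmk : (W.mkQ c : (κ → ℚ) ⧸ W) ≠ 0 := by
    simpa [Submodule.Quotient.mk_eq_zero] using hc
  have : ¬ ∀ φ : Module.Dual ℚ ((κ → ℚ) ⧸ W), φ (W.mkQ c) = 0 := by
    rw [Module.forall_dual_apply_eq_zero_iff]; exact hmk
  push_neg at this
  obtain ⟨f, hf⟩ := this
  set φ : Module.Dual ℚ (κ → ℚ) := f.comp W.mkQ with hφdef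
  have hφc : φ c ≠ 0 := hf
  have hφu : ∀ i, φ (u i) = 0 := by
    intro i
    have : u i ∈ W := Submodule.subset_span (Set.mem_range_self i)
    simp [hφdef, (Submodule.Quotient.mk_eq_zero W).2 this, Submodule.mkQ_apply]
  have hrep : ∀ v : κ → ℚ, φ v = ∑ k, v k * φ (Pi.single k 1) := by
    intro v
    have hv : v = ∑ k, v k • (Pi.single k (1:ℚ) : κ → ℚ) := by
      funext j
      simp [Finset.sum_apply, Pi.single_apply, mul_comm]
    conv_lhs => rw [hv]
    simp [map_sum, map_smul, smul_eq_mul]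
  have key : (0:ℝ) = (φ c : ℝ) := by
    have h1 : ∀ i, ∑ k, (u i k : ℝ) * (φ (Pi.single k 1) : ℝ) = 0 := by
      intro i
      have h2 : ((∑ k, u i k * φ (Pi.single k 1) : ℚ) : ℝ) = ((0:ℚ):ℝ) := by
        exact_mod_cast congrArg (fun x : ℚ => (x:ℝ)) ((hrep (u i)).symm.trans (hφu i))
      push_cast at h2
      simpa using h2
    calc (0:ℝ) = ∑ i, a i * 0 := by simp
    _ = ∑ i, a i * ∑ k, (u i k : ℝ) * (φ (Pi.single k 1):ℝ) := by
        refine Finset.sum_congr rfl fun i _ => by rw [h1 i]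
    _ = ∑ k, (∑ i, a i * (u i k : ℝ)) * (φ (Pi.single k 1):ℝ) := by
        simp_rw [Finset.mul_sum, Finset.sum_mul]
        rw [Finset.sum_comm]
        exact Finset.sum_congr rfl fun k _ => Finset.sum_congr rfl fun i _ => by ring
    _ = ∑ k, (c k : ℝ) * (φ (Pi.single k 1):ℝ) := by
        refine Finset.sum_congr rfl fun k _ => by rw [h k]
    _ = (φ c : ℝ) := by
        rw [hrep c]; push_cast; ring
  exact hφc (by exact_mod_cast key.symm)

def ratSols {ι κ : Type} [Fintype ι] [Fintype κ] (w : ι → κ → ℚ) (c : κ → ℚ) : Set (ι → ℝ) :=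
  (fun q : ι → ℚ => fun i => ((q i : ℝ))) ''
    {q | (∀ i, 0 ≤ q i) ∧ ∀ k, ∑ i, q i * w i k = c k}

lemma core_base {ι κ : Type} [Fintype ι] [Fintype κ] (w : ι → κ → ℚ) (c : κ → ℚ)
    (t : ι → ℝ) (ht0 : ∀ i, 0 ≤ t i) (htc : ∀ k, ∑ i, t i * (w i k : ℝ) = (c k : ℝ))
    (hV : ∀ d : ι → ℝ, (∀ i, t i = 0 → d i = 0) → (∀ k, ∑ i, d i * (w i k : ℝ) = 0) → d = 0) :
    t ∈ convexHull ℝ (ratSols w c) := by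
  classical
  obtain ⟨q, hq⟩ := descent (fun j : {i // t i ≠ 0} => w j.1) c (fun j => t j.1) (by
    intro k
    rw [← Finset.sum_subtype (p := fun i => t i ≠ 0)
      (univ.filter (fun i => t i ≠ 0)) (by simp) (fun i => t i * (w i k : ℝ)), ← htc k]
    exact (Finset.sum_filter_of_ne (fun i _ hne => by
      intro h0; rw [h0] at hne; simp at hne)))
  set q' : ι → ℚ := fun i => if h : t i ≠ 0 then q ⟨i, h⟩ else 0 with hq'def
  have hqsum : ∀ k, ∑ i, q' i * w i k = c k := by
    intro k
    calc ∑ i, q' i * w i k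
        = ∑ i ∈ univ.filter (fun i => t i ≠ 0), q' i * w i k :=
          (Finset.sum_filter_of_ne (fun i _ hne => by
            intro h0
            simp [hq'def, h0] at hne)).symm
      _ = ∑ j : {i // t i ≠ 0}, q' j.1 * w j.1 k :=
          Finset.sum_subtype (p := fun i => t i ≠ 0) _ (by simp) _
      _ = ∑ j : {i // t i ≠ 0}, q j * w j.1 k :=
          Finset.sum_congr rfl fun j _ => by simp [hq'def, j.2]
      _ = c k := hq k
  have hteq : t = fun i => ((q' i : ℝ)) := by
    have := hV (fun i => t i - (q' i : ℝ)) (fun i h0 => by simp [hq'def, h0]) (by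
      intro k
      simp only [sub_mul, Finset.sum_sub_distrib]
      rw [htc k]
      have h2 : ∑ i, ((q' i : ℝ)) * ((w i k : ℝ)) = (c k : ℝ) := by exact_mod_cast hqsum k
      rw [h2]; ring)
    funext i
    have := congrFun this i
    simpa [sub_eq_zero] using this
  refine subset_convexHull ℝ _ ?_
  refine ⟨q', ⟨fun i => ?_, hqsum⟩, hteq.symm⟩
  have : (0:ℝ) ≤ (q' i : ℝ) := by rw [← congrFun hteq i] at *; exact ht0 i
  exact_mod_cast this

lemma core {ι κ : Type} [Fintype ι] [Fintype κ] (w : ι → κ → ℚ) (c r : κ → ℚ)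
    (hone : ∀ i, ∑ k, w i k * r k = 1)
    (t : ι → ℝ) (ht0 : ∀ i, 0 ≤ t i) (htc : ∀ k, ∑ i, t i * (w i k : ℝ) = (c k : ℝ)) :
    t ∈ convexHull ℝ (ratSols w c) := by
  classical
  suffices aux : ∀ m : ℕ, ∀ t : ι → ℝ, (∀ i, 0 ≤ t i) →
      (∀ k, ∑ i, t i * (w i k : ℝ) = (c k : ℝ)) →
      (univ.filter (fun i => t i ≠ 0)).card ≤ m →
      t ∈ convexHull ℝ (ratSols w c) by
    exact aux (univ.filter (fun i => t i ≠ 0)).card t ht0 htc le_rfl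
  intro m
  induction m with
  | zero =>
    intro t ht0 htc hcard
    refine core_base w c t ht0 htc fun d hd0 hdc => funext fun i => ?_
    have hti : t i = 0 := by
      by_contra h
      have : i ∈ univ.filter (fun i => t i ≠ 0) := by simp [h]
      have := Finset.card_pos.2 ⟨i, this⟩
      omega
    simp [hd0 i hti]
  | succ m ih =>
    intro t ht0 htc hcard
    by_cases hV : ∀ d : ι → ℝ, (∀ i, t i = 0 → d i = 0) →
        (∀ k, ∑ i, d i * (w i k : ℝ) = 0) → d = 0
    · exact core_base w c t ht0 htc hV
    push_neg at hV
    obtain ⟨d, hd0, hdc, hdne⟩ := hV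
    have honeR : ∀ i, ∑ k, (w i k : ℝ) * (r k : ℝ) = 1 := by
      intro i
      exact_mod_cast hone i
    have hdsum : ∑ i, d i = 0 := by
      calc ∑ i, d i = ∑ i, d i * ∑ k, (w i k : ℝ) * (r k : ℝ) := by
            refine Finset.sum_congr rfl fun i _ => by rw [honeR i, mul_one]
        _ = ∑ k, (∑ i, d i * (w i k : ℝ)) * (r k : ℝ) := by
            simp_rw [Finset.mul_sum, Finset.sum_mul]
            rw [Finset.sum_comm]
            exact Finset.sum_congr rfl fun k _ => Finset.sum_congr rfl fun i _ => by ring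
        _ = 0 := by
            refine Finset.sum_eq_zero fun k _ => by rw [hdc k, zero_mul]
    have hex_neg : ∀ e : ι → ℝ, (∑ i, e i) = 0 → e ≠ 0 → ∃ i, e i < 0 := by
      intro e hsum hne
      by_contra h
      push_neg at h
      refine hne (funext fun i => ?_)
      exact (Finset.sum_eq_zero_iff_of_nonneg (fun i _ => h i)).1 hsum i (mem_univ i)
    obtain ⟨i₁, hi₁⟩ := hex_neg d hdsum hdne
    obtain ⟨i₂, hi₂⟩ := hex_neg (fun i => -d i) (by rw [Finset.sum_neg_distrib]; rw [hdsum]; ring) (by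
      intro h
      exact hdne (funext fun i => by simpa [neg_eq_zero] using congrFun h i))
    have hi₂' : 0 < d i₂ := by simpa using hi₂
    have tpos : ∀ i, d i ≠ 0 → 0 < t i := by
      intro i hdi
      rcases (ht0 i).lt_or_eq with h | h
      · exact h
      · exact absurd (hd0 i h.symm) hdi
    set Jneg := univ.filter (fun i => d i < 0) with hJneg
    set Jpos := univ.filter (fun i => 0 < d i) with hJpos
    have hneJ : Jneg.Nonempty := ⟨i₁, by simp [hJneg, hi₁]⟩
    have hpoJ : Jpos.Nonempty := ⟨i₂, by simp [hJpos, hi₂']⟩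
    set τ := Jneg.inf' hneJ (fun i => t i / (-d i)) with hτ
    set σ := Jpos.inf' hpoJ (fun i => t i / d i) with hσ
    have hτpos : 0 < τ := by
      rw [hτ, Finset.lt_inf'_iff]
      intro i hi
      rw [hJneg, mem_filter] at hi
      exact div_pos (tpos i (ne_of_lt hi.2)) (by linarith [hi.2])
    have hσpos : 0 < σ := by
      rw [hσ, Finset.lt_inf'_iff]
      intro i hi
      rw [hJpos, mem_filter] at hi
      exact div_pos (tpos i (ne_of_gt hi.2)) hi.2
    set t1 : ι → ℝ := fun i => t i + τ * d i with ht1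
    set t2 : ι → ℝ := fun i => t i - σ * d i with ht2
    have ht10 : ∀ i, 0 ≤ t1 i := by
      intro i
      rcases lt_or_ge (d i) 0 with h | h
      · have hle : τ ≤ t i / (-d i) := Finset.inf'_le _ (by simp [hJneg, h])
        rw [le_div_iff₀ (by linarith)] at hle
        simp only [ht1]; nlinarith
      · exact add_nonneg (ht0 i) (mul_nonneg hτpos.le (by linarith))
    have ht20 : ∀ i, 0 ≤ t2 i := by
      intro i
      rcases lt_or_ge 0 (d i) with h | h
      · have hle : σ ≤ t i / d i := Finset.inf'_le _ (by simp [hJpos, h])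
        rw [le_div_iff₀ h] at hle
        simp only [ht2]; nlinarith
      · simp only [ht2]; nlinarith [ht0 i, mul_nonpos_of_nonneg_of_nonpos hσpos.le h]
    have hc1 : ∀ k, ∑ i, t1 i * (w i k : ℝ) = (c k : ℝ) := by
      intro k
      simp only [ht1, add_mul]
      rw [Finset.sum_add_distrib, htc k]
      simp_rw [mul_assoc]
      rw [← Finset.mul_sum, hdc k, mul_zero, add_zero]
    have hc2 : ∀ k, ∑ i, t2 i * (w i k : ℝ) = (c k : ℝ) := by
      intro k
      simp only [ht2, sub_mul]
      rw [Finset.sum_sub_distrib, htc k]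
      simp_rw [mul_assoc]
      rw [← Finset.mul_sum, hdc k, mul_zero, sub_zero]
    -- support drops
    obtain ⟨j₁, hj₁mem, hj₁eq⟩ := Finset.exists_mem_eq_inf' hneJ (fun i => t i / (-d i))
    obtain ⟨j₂, hj₂mem, hj₂eq⟩ := Finset.exists_mem_eq_inf' hpoJ (fun i => t i / d i)
    have hdj₁ : d j₁ < 0 := by rw [hJneg, mem_filter] at hj₁mem; exact hj₁mem.2
    have hdj₂ : 0 < d j₂ := by rw [hJpos, mem_filter] at hj₂mem; exact hj₂mem.2
    have ht1j : t1 j₁ = 0 := by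
      simp only [ht1]
      rw [← hτ] at hj₁eq
      rw [hj₁eq]
      have hne : d j₁ ≠ 0 := ne_of_lt hdj₁
      have h9 : t j₁ / -d j₁ * d j₁ = -t j₁ := by
        rw [div_mul_eq_mul_div, div_neg, mul_div_assoc, div_self hne, mul_one]
      rw [h9]; ring
    have ht2j : t2 j₂ = 0 := by
      simp only [ht2]
      rw [← hσ] at hj₂eq
      rw [hj₂eq]
      have hne : d j₂ ≠ 0 := ne_of_gt hdj₂
      rw [div_mul_cancel₀ _ hne]; ring
    have hsupp : ∀ (s : ι → ℝ) (j : ι), s j = 0 → (∀ i, s i ≠ 0 → t i ≠ 0) → t j ≠ 0 →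
        (univ.filter (fun i => s i ≠ 0)).card ≤ m := by
      intro s j hsj hsupp htj
      have hsub : univ.filter (fun i => s i ≠ 0) ⊆ (univ.filter (fun i => t i ≠ 0)).erase j := by
        intro i hi
        rw [mem_filter] at hi
        rw [Finset.mem_erase, mem_filter]
        exact ⟨fun h => hi.2 (h ▸ hsj), mem_univ i, hsupp i hi.2⟩
      have := Finset.card_le_card hsub
      rw [Finset.card_erase_of_mem (by simp [htj])] at this
      omega
    have hm1 : (univ.filter (fun i => t1 i ≠ 0)).card ≤ m := by
      refine hsupp t1 j₁ ht1j (fun i hi hti => ?_) (ne_of_gt (tpos j₁ (ne_of_lt hdj₁)))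
      exact hi (by simp [ht1, hti, hd0 i hti])
    have hm2 : (univ.filter (fun i => t2 i ≠ 0)).card ≤ m := by
      refine hsupp t2 j₂ ht2j (fun i hi hti => ?_) (ne_of_gt (tpos j₂ (ne_of_gt hdj₂)))
      exact hi (by simp [ht2, hti, hd0 i hti])
    have hmem1 := ih t1 ht10 hc1 hm1
    have hmem2 := ih t2 ht20 hc2 hm2
    have hab : σ / (σ + τ) + τ / (σ + τ) = 1 := by
      field_simp
    have hteq : t = (σ / (σ + τ)) • t1 + (τ / (σ + τ)) • t2 := by
      funext i
      simp only [Pi.add_apply, Pi.smul_apply, smul_eq_mul, ht1, ht2]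
      field_simp
      ring
    rw [hteq]
    exact (convex_convexHull ℝ (ratSols w c)) hmem1 hmem2
      (div_nonneg hσpos.le (by linarith)) (div_nonneg hτpos.le (by linarith)) hab

lemma sum_mem_sm {n : ℕ} {C : Set (Fin n → ℤ)} (hC : IsSubmonoidSet C) {ι : Type*}
    (s : Finset ι) (f : ι → (Fin n → ℤ)) (h : ∀ i ∈ s, f i ∈ C) : ∑ i ∈ s, f i ∈ C := by
  classical
  induction s using Finset.induction_on with
  | empty => simpa using hC.1
  | @insert _ _ hx ih =>
    rw [Finset.sum_insert hx]
    exact hC.2 _ (h _ (Finset.mem_insert_self _ _)) _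
      (ih fun i hi => h i (Finset.mem_insert_of_mem hi))

lemma nsmul_mem_sm {n : ℕ} {C : Set (Fin n → ℤ)} (hC : IsSubmonoidSet C) (m : ℕ)
    {a : Fin n → ℤ} (ha : a ∈ C) : m • a ∈ C := by
  induction m with
  | zero => simpa using hC.1
  | succ m ih =>
    rw [succ_nsmul]
    exact hC.2 _ ih _ ha

lemma rat_clear (q : ℚ) (N : ℕ) (h : q.den ∣ N) (hq : 0 ≤ q) :
    ∃ m : ℕ, ((m : ℚ)) = q * N := by
  have hden : ((q.den : ℚ)) ≠ 0 := by exact_mod_cast q.den_nz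
  refine ⟨(q.num.toNat * (N / q.den) : ℕ), ?_⟩
  have hnum : (0:ℤ) ≤ q.num := Rat.num_nonneg.2 hq
  have h1 : ((q.num.toNat * (N / q.den) : ℕ) : ℚ) = (q.num : ℚ) * ((N : ℚ) / (q.den : ℚ)) := by
    have h2 : ((q.num.toNat : ℚ)) = (q.num : ℚ) := by exact_mod_cast Int.toNat_of_nonneg hnum
    push_cast [Nat.cast_div h hden]
    rw [h2]
  rw [h1]
  conv_rhs => rw [← Rat.num_div_den q]
  ring

lemma key_rep {n : ℕ} {C : Set (Fin n → ℤ)} (hC : IsSubmonoidSet C) {ι : Type} [Fintype ι]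
    (g : ι → (Fin n → ℤ)) (hg : ∀ i, g i ∈ C) (q : ι → ℚ) (hq0 : ∀ i, 0 ≤ q i)
    (N : ℕ) (hden : ∀ i, (q i).den ∣ N) :
    ∃ β : Fin n → ℤ, β ∈ C ∧ ∀ j, (β j : ℚ) = N * ∑ i, q i * (g i j : ℚ) := by
  classical
  choose m hm using fun i => rat_clear (q i) N (hden i) (hq0 i)
  refine ⟨∑ i, m i • g i, sum_mem_sm hC _ _ (fun i _ => nsmul_mem_sm hC (m i) (hg i)), ?_⟩
  intro j
  have : (∑ i, m i • g i) j = ∑ i, (m i : ℤ) * g i j := by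
    rw [Finset.sum_apply]
    exact Finset.sum_congr rfl fun i _ => by simp [mul_comm]
  rw [this]
  push_cast
  rw [Finset.mul_sum]
  refine Finset.sum_congr rfl fun i _ => ?_
  rw [hm i]
  ring

/-- An integer point in the convex hull of a pure submonoid lies in the submonoid. -/
lemma mem_of_coeR_mem_convC {n : ℕ} {D : Set (Fin n → ℤ)} (hD : IsSubmonoidSet D)
    (hpD : IsPure D) (α : Fin n → ℤ) (h : coeR α ∈ convC D) : α ∈ D := by
  classical
  rw [convC, _root_.convexHull_eq] at h
  obtain ⟨ι', s, wgt, z, hw0, hw1, hz, hcm⟩ := h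
  rw [Finset.centerMass_eq_of_sum_1 _ _ hw1] at hcm
  choose d hd1 hd2 using fun (i : ↥s) => hz i.1 i.2
  -- set up the linear system
  set w : ↥s → (Sum (Fin n) Unit) → ℚ :=
    fun i => Sum.elim (fun j => ((d i j : ℚ))) (fun _ => 1) with hw
  set c : Sum (Fin n) Unit → ℚ := Sum.elim (fun j => ((α j : ℚ))) (fun _ => 1) with hcd
  have hone : ∀ i, ∑ k, w i k * (Sum.elim (0 : Fin n → ℚ) (fun _ => 1)) k = 1 := by
    intro i
    rw [Fintype.sum_sum_type]
    simp [hw]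
  have hcore := core w c _ hone (fun i => wgt i.1) (fun i => hw0 i.1 i.2) (by
    rintro (j | u)
    · have : ∀ i : ↥s, z i.1 j = ((d i j : ℝ)) := fun i => by
        rw [← hd2 i]; rfl
      have hx : (∑ i ∈ s, wgt i • z i) j = ((α j : ℝ)) := by rw [hcm]; rfl
      rw [Finset.sum_apply] at hx
      simp only [Pi.smul_apply, smul_eq_mul] at hx
      rw [← Finset.sum_attach s (fun i => wgt i * z i j)] at hx
      simp only [hw, hcd, Sum.elim_inl]
      push_cast
      rw [← hx, Finset.univ_eq_attach]
      exact Finset.sum_congr rfl fun i _ => by rw [this i]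
    · simp only [hw, hcd, Sum.elim_inr]
      push_cast
      simp only [mul_one]
      rw [Finset.univ_eq_attach, Finset.sum_attach s wgt, hw1])
  have hne : (ratSols w c).Nonempty := by
    by_contra hemp
    rw [Set.not_nonempty_iff_eq_empty] at hemp
    rw [hemp, convexHull_empty] at hcore
    exact hcore
  obtain ⟨-, ⟨q, ⟨hq0, hqc⟩, -⟩⟩ := hne
  set N : ℕ := ∏ i, (q i).den with hN
  have hden : ∀ i, (q i).den ∣ N := fun i => Finset.dvd_prod_of_mem _ (Finset.mem_univ i)
  have hN1 : 1 ≤ N := Nat.one_le_iff_ne_zero.2 (Finset.prod_ne_zero_iff.2 fun i _ => (q i).den_nz)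
  obtain ⟨β, hβD, hβval⟩ := key_rep hD d (fun i => hd1 i) q hq0 N hden
  have hβα : β = N • α := by
    funext j
    have h1 : ∑ i, q i * ((d i j : ℚ)) = ((α j : ℚ)) := by
      have := hqc (Sum.inl j)
      simpa [hw, hcd] using this
    have : (β j : ℚ) = ((N • α) j : ℚ) := by
      rw [hβval j, h1]
      push_cast
      simp [mul_comm]
    exact_mod_cast this
  exact hpD N α hN1 (hβα ▸ hβD)

lemma inter_convC_subset {n : ℕ} {C D : Set (Fin n → ℤ)} (hC : IsSubmonoidSet C)
    (hD : IsSubmonoidSet D) : convC C ∩ convC D ⊆ convC (C ∩ D) := by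
  classical
  rintro x ⟨hx1, hx2⟩
  rw [convC, _root_.convexHull_eq] at hx1 hx2
  obtain ⟨ι₁, s₁, w₁, z₁, hw₁0, hw₁1, hz₁, hcm₁⟩ := hx1
  obtain ⟨ι₂, s₂, w₂, z₂, hw₂0, hw₂1, hz₂, hcm₂⟩ := hx2
  rw [Finset.centerMass_eq_of_sum_1 _ _ hw₁1] at hcm₁
  rw [Finset.centerMass_eq_of_sum_1 _ _ hw₂1] at hcm₂
  choose cf hcf1 hcf2 using fun (i : ↥s₁) => hz₁ i.1 i.2
  choose dg hdg1 hdg2 using fun (i : ↥s₂) => hz₂ i.1 i.2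
  set ι : Type := Sum (↥s₁) (↥s₂) with hι
  set κ : Type := Sum (Fin n) Bool with hκ
  set w : ι → κ → ℚ := Sum.elim
      (fun f => Sum.elim (fun j => ((cf f j : ℚ))) (fun b => if b then 1 else 0))
      (fun g => Sum.elim (fun j => -((dg g j : ℚ))) (fun b => if b then 0 else 1)) with hwdef
  set c : κ → ℚ := Sum.elim 0 (fun _ => 1) with hcdef
  have hone : ∀ i, ∑ k, w i k * (Sum.elim (0 : Fin n → ℚ) (fun _ => 1)) k = 1 := by
    rintro (f | g) <;>
      · rw [Fintype.sum_sum_type]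
        simp [hwdef, Fintype.sum_bool]
  set t : ι → ℝ := Sum.elim (fun f => w₁ f.1) (fun g => w₂ g.1) with htdef
  have ht0 : ∀ i, 0 ≤ t i := by
    rintro (f | g)
    · exact hw₁0 f.1 f.2
    · exact hw₂0 g.1 g.2
  have hxj1 : ∀ j, ∑ f : ↥s₁, w₁ f.1 * ((cf f j : ℝ)) = x j := by
    intro j
    have hx : (∑ i ∈ s₁, w₁ i • z₁ i) j = x j := by rw [hcm₁]
    rw [Finset.sum_apply] at hx
    simp only [Pi.smul_apply, smul_eq_mul] at hx
    rw [← Finset.sum_attach s₁ (fun i => w₁ i * z₁ i j)] at hx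
    rw [Finset.univ_eq_attach, ← hx]
    refine Finset.sum_congr rfl fun i _ => ?_
    rw [← hcf2 i]; rfl
  have hxj2 : ∀ j, ∑ g : ↥s₂, w₂ g.1 * ((dg g j : ℝ)) = x j := by
    intro j
    have hx : (∑ i ∈ s₂, w₂ i • z₂ i) j = x j := by rw [hcm₂]
    rw [Finset.sum_apply] at hx
    simp only [Pi.smul_apply, smul_eq_mul] at hx
    rw [← Finset.sum_attach s₂ (fun i => w₂ i * z₂ i j)] at hx
    rw [Finset.univ_eq_attach, ← hx]
    refine Finset.sum_congr rfl fun i _ => ?_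
    rw [← hdg2 i]; rfl
  have htc : ∀ k, ∑ i, t i * (w i k : ℝ) = (c k : ℝ) := by
    rintro (j | b)
    · rw [Fintype.sum_sum_type]
      simp only [htdef, hwdef, hcdef, Sum.elim_inl, Sum.elim_inr]
      push_cast
      rw [hxj1 j]
      have : ∑ g : ↥s₂, w₂ g.1 * -((dg g j : ℝ)) = -x j := by
        rw [← hxj2 j, ← Finset.sum_neg_distrib]
        exact Finset.sum_congr rfl fun g _ => by ring
      rw [this]
      simp
    · rw [Fintype.sum_sum_type]
      cases b
      · simp only [htdef, hwdef, hcdef, Sum.elim_inl, Sum.elim_inr]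
        push_cast
        norm_num
        rw [Finset.sum_attach s₂ w₂, hw₂1]
      · simp only [htdef, hwdef, hcdef, Sum.elim_inl, Sum.elim_inr]
        push_cast
        norm_num
        rw [Finset.sum_attach s₁ w₁, hw₁1]
  have hcore := core w c _ hone t ht0 htc
  -- the linear map sending weights to the corresponding point
  set L : (ι → ℝ) →ₗ[ℝ] (Fin n → ℝ) :=
    { toFun := fun u => ∑ f : ↥s₁, u (Sum.inl f) • coeR (cf f)
      map_add' := by
        intro u v
        simp only [Pi.add_apply, add_smul]
        rw [Finset.sum_add_distrib]
      map_smul' := by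
        intro a u
        simp only [Pi.smul_apply, smul_eq_mul, RingHom.id_apply, Finset.smul_sum, mul_smul] } with hLdef
  have hLt : L t = x := by
    funext j
    simp only [hLdef, LinearMap.coe_mk, AddHom.coe_mk, htdef]
    rw [Finset.sum_apply]
    simp only [Pi.smul_apply, smul_eq_mul, Sum.elim_inl]
    exact hxj1 j
  have himg : L '' (ratSols w c) ⊆ convC (C ∩ D) := by
    rintro - ⟨-, ⟨q, ⟨hq0, hqc⟩, rfl⟩, rfl⟩
    set N : ℕ := ∏ i, (q i).den with hN
    have hden : ∀ i, (q i).den ∣ N := fun i => Finset.dvd_prod_of_mem _ (Finset.mem_univ i)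
    have hN1 : 1 ≤ N :=
      Nat.one_le_iff_ne_zero.2 (Finset.prod_ne_zero_iff.2 fun i _ => (q i).den_nz)
    obtain ⟨β, hβC, hβval⟩ := key_rep hC cf (fun i => hcf1 i) (fun f => q (Sum.inl f))
      (fun f => hq0 _) N (fun f => hden _)
    obtain ⟨γ, hγD, hγval⟩ := key_rep hD dg (fun i => hdg1 i) (fun g => q (Sum.inr g))
      (fun g => hq0 _) N (fun g => hden _)
    have hβγ : β = γ := by
      funext j
      have h0 : ∑ i, q i * w i (Sum.inl j) = 0 := by
        have := hqc (Sum.inl j); rw [hcdef] at this; simpa using this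
      rw [Fintype.sum_sum_type] at h0
      simp only [hwdef, Sum.elim_inl, Sum.elim_inr] at h0
      have : (β j : ℚ) = (γ j : ℚ) := by
        rw [hβval j, hγval j]
        have h1 : ∑ f : ↥s₁, q (Sum.inl f) * ((cf f j : ℚ)) =
            ∑ g : ↥s₂, q (Sum.inr g) * ((dg g j : ℚ)) := by
          have h2 : ∑ g : ↥s₂, q (Sum.inr g) * -((dg g j : ℚ)) =
              -∑ g : ↥s₂, q (Sum.inr g) * ((dg g j : ℚ)) := by
            rw [← Finset.sum_neg_distrib]
            exact Finset.sum_congr rfl fun g _ => by ring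
          rw [h2] at h0
          linarith
        rw [h1]
      exact_mod_cast this
    have hβCD : β ∈ C ∩ D := ⟨hβC, hβγ ▸ hγD⟩
    -- L (coe q) = (1/N) • coeR β, a convex combination of 0 and β
    have hLq : (L fun i => ((q i : ℝ))) = (1 - 1/(N:ℝ)) • coeR 0 + (1/(N:ℝ)) • coeR β := by
      funext j
      have hNne : ((N:ℝ)) ≠ 0 := by positivity
      have hβj : ((β j : ℝ)) = (N : ℝ) * ∑ f : ↥s₁, ((q (Sum.inl f) : ℝ)) * ((cf f j : ℝ)) := by
        have := hβval j
        have h3 : ((β j : ℚ) : ℝ) = (((N : ℚ) * ∑ f : ↥s₁, q (Sum.inl f) * ((cf f j : ℚ)) : ℚ) : ℝ) := by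
          exact_mod_cast congrArg (fun y : ℚ => (y : ℝ)) this
        push_cast at h3
        exact_mod_cast h3
      simp only [hLdef, LinearMap.coe_mk, AddHom.coe_mk, Pi.add_apply, Pi.smul_apply,
        Finset.sum_apply, smul_eq_mul, coeR, Pi.zero_apply, Int.cast_zero, mul_zero]
      rw [hβj]
      field_simp
      ring
    rw [hLq]
    have h0mem : coeR 0 ∈ convC (C ∩ D) :=
      subset_convexHull ℝ _ ⟨0, ⟨hC.1, hD.1⟩, rfl⟩
    have hβmem : coeR β ∈ convC (C ∩ D) := subset_convexHull ℝ _ ⟨β, hβCD, rfl⟩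
    refine (convex_convexHull ℝ _) h0mem hβmem ?_ ?_ (by ring)
    · have : (1:ℝ) ≤ (N:ℝ) := by exact_mod_cast hN1
      have : 1/(N:ℝ) ≤ 1 := by
        rw [div_le_one (by linarith)]; linarith
      linarith
    · positivity
  have : x ∈ convexHull ℝ (L '' (ratSols w c)) := by
    rw [← L.image_convexHull]
    exact ⟨t, hcore, hLt⟩
  exact convexHull_min himg (convex_convexHull ℝ _) this

end Aux

/-- For pure submonoids `C, D` of `ℤⁿ`:
`conv(C) ∩ conv(D) = conv(C ∩ conv(D)) = conv(C ∩ D)`. -/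
theorem convexHull_inter_of_pure {n : ℕ} (C D : Set (Fin n → ℤ))
    (hC : IsSubmonoidSet C) (hD : IsSubmonoidSet D)
    (hpC : IsPure C) (hpD : IsPure D) :
    convC C ∩ convC D = convexHull ℝ (coeR '' {α ∈ C | coeR α ∈ convC D}) ∧
    convexHull ℝ (coeR '' {α ∈ C | coeR α ∈ convC D}) = convC (C ∩ D) := by
  have hE : {α ∈ C | coeR α ∈ convC D} = C ∩ D := by
    ext α
    constructor
    · rintro ⟨h1, h2⟩
      exact ⟨h1, mem_of_coeR_mem_convC hD hpD α h2⟩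
    · rintro ⟨h1, h2⟩
      exact ⟨h1, subset_convexHull ℝ _ ⟨α, h2, rfl⟩⟩
  have hmain : convC C ∩ convC D = convC (C ∩ D) := by
    apply Set.Subset.antisymm (inter_convC_subset hC hD)
    apply Set.subset_inter
    · exact convexHull_mono (Set.image_mono Set.inter_subset_left)
    · exact convexHull_mono (Set.image_mono Set.inter_subset_right)
  constructor
  · rw [hE]
    exact hmain
  · rw [hE]
    rfl
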